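/- Let φ be an automorphism of the once-punctured torus whose induced map on H_1 is given by a matrix A ∈ SL(2,ℤ). If A can be written as a product X^{a_1} Y^{-b_1} ⋯ X^{a_n} Y^{-b_n} with all a_i, b_j ≥ 0 and some a_i ≠ 0 and some b_j ≠ 0 (where X = [[1,1],[0,1]], Y = [[1,0],[-1,1]]), then trace(A) > 2. -/

import Mathlib

open Matrix

def Xm : Matrix.SpecialLinearGroup (Fin 2) ℤ :=
  ⟨!![1, 1; 0, 1], by norm_num [Matrix.det_fin_two_of]⟩

def Ym : Matrix.SpecialLinearGroup (Fin 2) ℤ :=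
  ⟨!![1, 0; -1, 1], by norm_num [Matrix.det_fin_two_of]⟩

def Good (M : Matrix (Fin 2) (Fin 2) ℤ) (c d : ℤ) : Prop :=
  1 ≤ M 0 0 ∧ 1 ≤ M 1 1 ∧ c ≤ M 0 1 ∧ d ≤ M 1 0 ∧ 0 ≤ M 0 1 ∧ 0 ≤ M 1 0

lemma Good.mul {M N : Matrix (Fin 2) (Fin 2) ℤ} {c d c' d' : ℤ}
    (hc : 0 ≤ c) (hd : 0 ≤ d) (hc' : 0 ≤ c') (hd' : 0 ≤ d')
    (hM : Good M c d) (hN : Good N c' d') : Good (M * N) (c + c') (d + d') := by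
  obtain ⟨m1, m2, m3, m4, m5, m6⟩ := hM
  obtain ⟨n1, n2, n3, n4, n5, n6⟩ := hN
  refine ⟨?_, ?_, ?_, ?_, ?_, ?_⟩ <;>
    simp only [Matrix.mul_apply, Fin.sum_univ_two] <;> nlinarith

lemma xpow (k : ℕ) : ((Xm ^ k : Matrix.SpecialLinearGroup (Fin 2) ℤ) :
    Matrix (Fin 2) (Fin 2) ℤ) = !![1, (k : ℤ); 0, 1] := by
  induction k with
  | zero => simp [Matrix.one_fin_two]
  | succ k ih =>
      rw [pow_succ, Matrix.SpecialLinearGroup.coe_mul, ih]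
      ext i j
      fin_cases i <;> fin_cases j <;>
        simp [Xm, Matrix.mul_apply, Fin.sum_univ_two] <;> push_cast <;> ring

def Yinv : Matrix.SpecialLinearGroup (Fin 2) ℤ :=
  ⟨!![1, 0; 1, 1], by norm_num [Matrix.det_fin_two_of]⟩

lemma ym_inv : Ym⁻¹ = Yinv := by
  rw [inv_eq_iff_mul_eq_one]
  ext i j
  rw [Matrix.SpecialLinearGroup.coe_mul]
  fin_cases i <;> fin_cases j <;>
    simp [Ym, Yinv, Matrix.SpecialLinearGroup.coe_mul, Matrix.mul_apply, Fin.sum_univ_two]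

lemma ypow (k : ℕ) : ((Ym ^ (-(k : ℤ)) : Matrix.SpecialLinearGroup (Fin 2) ℤ) :
    Matrix (Fin 2) (Fin 2) ℤ) = !![1, 0; (k : ℤ), 1] := by
  rw [_root_.zpow_neg, zpow_natCast, ← inv_pow, ym_inv]
  induction k with
  | zero => simp [Matrix.one_fin_two]
  | succ k ih =>
      rw [pow_succ, Matrix.SpecialLinearGroup.coe_mul, ih]
      ext i j
      fin_cases i <;> fin_cases j <;>
        simp [Yinv, Matrix.mul_apply, Fin.sum_univ_two] <;> push_cast <;> ring

lemma block_good (p q : ℕ) :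
    Good ((Xm ^ (p : ℤ) * Ym ^ (-(q : ℤ)) : Matrix.SpecialLinearGroup (Fin 2) ℤ) :
      Matrix (Fin 2) (Fin 2) ℤ) p q := by
  rw [Matrix.SpecialLinearGroup.coe_mul, zpow_natCast, xpow, ypow]
  refine ⟨?_, ?_, ?_, ?_, ?_, ?_⟩ <;>
    simp [Matrix.mul_apply, Fin.sum_univ_two] <;> positivity

lemma prod_good (n : ℕ) (a b : Fin n → ℕ) :
    Good (((List.ofFn fun i => Xm ^ (a i : ℤ) * Ym ^ (-(b i : ℤ))).prod :
        Matrix.SpecialLinearGroup (Fin 2) ℤ) : Matrix (Fin 2) (Fin 2) ℤ)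
      (∑ i, (a i : ℤ)) (∑ i, (b i : ℤ)) := by
  induction n with
  | zero => simp [Good, Matrix.one_fin_two]
  | succ m ih =>
      rw [List.ofFn_succ, List.prod_cons, Matrix.SpecialLinearGroup.coe_mul,
        Fin.sum_univ_succ, Fin.sum_univ_succ]
      exact Good.mul (by positivity) (by positivity) (by positivity) (by positivity)
        (block_good _ _) (ih (fun i => a i.succ) (fun i => b i.succ))

/-- If `A = X^{a_1} Y^{-b_1} ⋯ X^{a_n} Y^{-b_n}` with all `a_i, b_j ≥ 0`,
some `a_i ≠ 0` and some `b_j ≠ 0`, then `trace A > 2`. -/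
theorem trace_gt_two_of_typeI (n : ℕ) (a b : Fin n → ℕ)
    (ha : ∃ i, a i ≠ 0) (hb : ∃ j, b j ≠ 0)
    (A : Matrix.SpecialLinearGroup (Fin 2) ℤ)
    (hA : A = (List.ofFn fun i => Xm ^ (a i : ℤ) * Ym ^ (-(b i : ℤ))).prod) :
    2 < Matrix.trace (A : Matrix (Fin 2) (Fin 2) ℤ) := by
  obtain ⟨i, hi⟩ := ha
  obtain ⟨j, hj⟩ := hb
  have key := prod_good n a b
  rw [← hA] at key
  obtain ⟨m1, m2, m3, m4, m5, m6⟩ := key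
  have hsa : (1 : ℤ) ≤ ∑ i, (a i : ℤ) := by
    calc (1 : ℤ) ≤ (a i : ℤ) := by exact_mod_cast Nat.one_le_iff_ne_zero.2 hi
    _ ≤ _ := Finset.single_le_sum (f := fun k => (a k : ℤ)) (fun k _ => by positivity) (Finset.mem_univ i)
  have hsb : (1 : ℤ) ≤ ∑ i, (b i : ℤ) := by
    calc (1 : ℤ) ≤ (b j : ℤ) := by exact_mod_cast Nat.one_le_iff_ne_zero.2 hj
    _ ≤ _ := Finset.single_le_sum (f := fun k => (b k : ℤ)) (fun k _ => by positivity) (Finset.mem_univ j)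
  have hdet : (A : Matrix (Fin 2) (Fin 2) ℤ).det = 1 := A.prop
  rw [Matrix.det_fin_two] at hdet
  rw [Matrix.trace_fin_two]
  nlinarith [m1, m2, m3.trans' hsa, m4.trans' hsb]
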